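/- Let 0 ≤ a ≤ b < 2^{n−2} and 0 < c < 2^{n−2}. Then the n-bit value t = (b − a + (2^n − c)) mod 2^n has sign bit 1 if and only if b − a < c. Combined with the previous check, the two flag conditions (sign bit of (b − a mod 2^n) is 0, and sign bit of (b − a − c mod 2^n) is 1) together hold if and only if 0 ≤ b − a < c. -/

import Mathlib

/-- For `0 ≤ a ≤ b < 2^(n-2)` and `0 < c < 2^(n-2)`: the `n`-bit value
`t = (b - a + (2^n - c)) mod 2^n` has sign bit `1` iff `b - a < c`; and the two flag
conditions (sign bit of `b - a mod 2^n` is `0`, sign bit of `t` is `1`) together hold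
iff `0 ≤ b - a < c`. -/
theorem flag_conditions (n a b c : ℕ) (hn : 2 ≤ n) (hab : a ≤ b)
    (hb : b < 2 ^ (n - 2)) (hc0 : 0 < c) (hc : c < 2 ^ (n - 2)) :
    (((((b - a) + (2 ^ n - c)) % 2 ^ n) / 2 ^ (n - 1)) % 2 = 1 ↔ b - a < c) ∧
    (((((b - a) % 2 ^ n) / 2 ^ (n - 1)) % 2 = 0 ∧
        ((((b - a) + (2 ^ n - c)) % 2 ^ n) / 2 ^ (n - 1)) % 2 = 1) ↔ b - a < c) := by
  have hH : 2 ^ (n - 1) = 2 * 2 ^ (n - 2) := by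
    have h : n - 1 = n - 2 + 1 := by omega
    rw [h, pow_succ, mul_comm]
  have hN : 2 ^ n = 4 * 2 ^ (n - 2) := by
    have h : n = n - 2 + 2 := by omega
    calc 2 ^ n = 2 ^ (n - 2 + 2) := by rw [← h]
    _ = 4 * 2 ^ (n - 2) := by rw [pow_add]; ring
  rw [hN, hH]
  have hP : 0 < 2 ^ (n - 2) := by positivity
  generalize hPdef : 2 ^ (n - 2) = P at hb hc hP ⊢
  have hdlt : b - a < P := lt_of_le_of_lt (Nat.sub_le b a) hb
  generalize hd : b - a = d at hdlt ⊢
  have key : ((d + (4 * P - c)) % (4 * P)) / (2 * P) % 2 = 1 ↔ d < c := by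
    rcases lt_or_ge d c with h | h
    · have heq : d + (4 * P - c) = 4 * P - (c - d) := by omega
      have hm : 4 * P - (c - d) < 4 * P := by omega
      have hlo : 1 * (2 * P) ≤ 4 * P - (c - d) := by omega
      have hhi : 4 * P - (c - d) < 2 * (2 * P) := by omega
      have hq : (4 * P - (c - d)) / (2 * P) = 1 := Nat.div_eq_of_lt_le hlo hhi
      rw [heq, Nat.mod_eq_of_lt hm, hq]
      simp [h]
    · have heq : d + (4 * P - c) = 4 * P + (d - c) := by omega
      have hm : d - c < 4 * P := by omega
      have hdv : (d - c) / (2 * P) = 0 := Nat.div_eq_of_lt (by omega)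
      rw [heq, Nat.add_mod_left, Nat.mod_eq_of_lt hm, hdv]
      omega
  refine ⟨key, ?_⟩
  have hm : d < 4 * P := by omega
  have hd0 : d % (4 * P) / (2 * P) % 2 = 0 := by
    rw [Nat.mod_eq_of_lt hm, Nat.div_eq_of_lt (by omega)]
  rw [key]
  simp [hd0]
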